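/- arXiv:2004.04212 — 4 statements merged into one kernel-verified Lean document; each statement's English description precedes it below -/
import Mathlib

section
/- Fix M > 0 and a bounded measurable function V : ℝ → ℝ with V(x) = 0 for x ∉ [0, M], and let θ ∈ ℝ with θ ≠ 0 and ψ_θ'(M) = 0. Then ∫₀ᴹ V(t) ψ_θ(t)² dt = −(1/θ) ∫₀ᴹ (ψ_θ'(t))² dt, and in particular ∫₀ᴹ V(t) ψ_θ(t)² dt ≠ 0. -/
open MeasureTheory Set Function

lemma swap_aux (b : ℝ) (hb : 0 ≤ b) (u v : ℝ → ℝ) (hu : Measurable u)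
    (Cu : ℝ) (hCu : ∀ x, |u x| ≤ Cu) (hv : Continuous v) :
    ∫ t in (0:ℝ)..b, (∫ s in (0:ℝ)..t, u s) * v t
      = ∫ s in (0:ℝ)..b, u s * ∫ t in s..b, v t := by
  obtain ⟨Cv, hCv⟩ : ∃ Cv, ∀ x ∈ Icc (0:ℝ) b, |v x| ≤ Cv := by
    obtain ⟨Cv, h⟩ := isCompact_Icc.exists_bound_of_continuousOn
      (s := Icc (0:ℝ) b) hv.continuousOn
    exact ⟨Cv, fun x hx => by simpa using h x hx⟩
  set μ := (volume : Measure ℝ).restrict (Ioc (0:ℝ) b) with hμ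
  haveI : IsFiniteMeasure μ := by
    constructor
    rw [hμ, Measure.restrict_apply_univ, Real.volume_Ioc]
    exact ENNReal.ofReal_lt_top
  set g : ℝ → ℝ → ℝ := fun t s => if s ≤ t then u s * v t else 0 with hg
  have hmeas : Measurable (uncurry g) := by
    apply Measurable.ite (measurableSet_le measurable_snd measurable_fst)
    · exact (hu.comp measurable_snd).mul (hv.measurable.comp measurable_fst)
    · exact measurable_const
  have hint : Integrable (uncurry g) (μ.prod μ) := by
    refine Integrable.mono' (integrable_const (Cu * Cv)) hmeas.aestronglyMeasurable ?_
    have hmem : ∀ᵐ p ∂(μ.prod μ), p ∈ Ioc (0:ℝ) b ×ˢ Ioc (0:ℝ) b := by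
      rw [hμ, Measure.prod_restrict]
      exact ae_restrict_mem (measurableSet_Ioc.prod measurableSet_Ioc)
    filter_upwards [hmem] with p hp
    have h1 : (0:ℝ) ≤ Cu := le_trans (abs_nonneg _) (hCu 0)
    have h2 : |v p.1| ≤ Cv := hCv p.1 (Ioc_subset_Icc_self hp.1)
    simp only [uncurry, hg]
    split_ifs with h
    · calc ‖u p.2 * v p.1‖ = |u p.2| * |v p.1| := abs_mul _ _
        _ ≤ Cu * Cv := mul_le_mul (hCu _) h2 (abs_nonneg _) h1
    · simp only [norm_zero]
      exact mul_nonneg h1 (le_trans (abs_nonneg _) h2)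
  have hswap := MeasureTheory.integral_integral_swap hint
  have hL : ∫ t, (∫ s, g t s ∂μ) ∂μ = ∫ t in (0:ℝ)..b, (∫ s in (0:ℝ)..t, u s) * v t := by
    rw [intervalIntegral.integral_of_le hb, hμ]
    refine setIntegral_congr_fun measurableSet_Ioc (fun t ht => ?_)
    have he : (fun s => g t s) = (Iic t).indicator (fun s => u s * v t) := by
      funext s
      simp only [hg, indicator, mem_Iic]
    rw [he, integral_indicator measurableSet_Iic, Measure.restrict_restrict measurableSet_Iic]
    have hset : Iic t ∩ Ioc 0 b = Ioc 0 t := by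
      ext x
      simp only [mem_inter_iff, mem_Iic, mem_Ioc]
      constructor
      · rintro ⟨h1, h2, _⟩; exact ⟨h2, h1⟩
      · rintro ⟨h1, h2⟩; exact ⟨h2, h1, h2.trans ht.2⟩
    rw [hset, MeasureTheory.integral_mul_const, intervalIntegral.integral_of_le ht.1.le]
  have hR : ∫ s, (∫ t, g t s ∂μ) ∂μ = ∫ s in (0:ℝ)..b, u s * ∫ t in s..b, v t := by
    rw [intervalIntegral.integral_of_le hb, hμ]
    refine setIntegral_congr_fun measurableSet_Ioc (fun s hs => ?_)
    have he : (fun t => g t s) = (Ici s).indicator (fun t => u s * v t) := by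
      funext t
      simp only [hg, indicator, mem_Ici]
    rw [he, integral_indicator measurableSet_Ici, Measure.restrict_restrict measurableSet_Ici]
    have hset : Ici s ∩ Ioc 0 b = Icc s b := by
      ext x
      simp only [mem_inter_iff, mem_Ici, mem_Ioc, mem_Icc]
      constructor
      · rintro ⟨h1, _, h3⟩; exact ⟨h1, h3⟩
      · rintro ⟨h1, h2⟩; exact ⟨h1, lt_of_lt_of_le hs.1 h1, h2⟩
    rw [hset, integral_Icc_eq_integral_Ioc, MeasureTheory.integral_const_mul,
      intervalIntegral.integral_of_le hs.2]
  rw [← hL, ← hR, hswap]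

/-- If `θ ≠ 0` and `ψ_θ'(M) = 0`, then
`∫₀ᴹ V ψ_θ² = −(1/θ) ∫₀ᴹ (ψ_θ')²`, and in particular `∫₀ᴹ V ψ_θ² ≠ 0`.
Here `ψ_θ'(x) = 1 + θ ∫₀ˣ V ψ_θ`. -/
theorem integral_V_psi_sq_ne_zero
    (M : ℝ) (hM : 0 < M) (V : ℝ → ℝ) (hVmeas : Measurable V)
    (hVbd : ∃ C : ℝ, ∀ x : ℝ, |V x| ≤ C)
    (hVsupp : ∀ x : ℝ, x ∉ Set.Icc 0 M → V x = 0)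
    (θ : ℝ) (hθ : θ ≠ 0) (ψ : ℝ → ℝ) (hψc : ContinuousOn ψ (Set.Ici 0))
    (hψ : ∀ x ≥ (0:ℝ), ψ x = x + θ * ∫ t in (0:ℝ)..x, (x - t) * V t * ψ t)
    (hres : 1 + θ * ∫ t in (0:ℝ)..M, V t * ψ t = 0) :
    (∫ t in (0:ℝ)..M, V t * ψ t ^ 2)
      = -(1 / θ) * ∫ t in (0:ℝ)..M, (1 + θ * ∫ s in (0:ℝ)..t, V s * ψ s) ^ 2 ∧
    (∫ t in (0:ℝ)..M, V t * ψ t ^ 2) ≠ 0 := by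
  obtain ⟨C, hC⟩ := hVbd
  have hC0 : (0:ℝ) ≤ C := le_trans (abs_nonneg _) (hC 0)
  -- continuous extension of ψ
  set ψ₀ : ℝ → ℝ := fun t => ψ (max t 0) with hψ₀def
  have hψ₀cont : Continuous ψ₀ :=
    hψc.comp_continuous (continuous_id.max continuous_const) (fun x => Set.mem_Ici.mpr (le_max_right _ _))
  have hψ₀eq : ∀ x ≥ (0:ℝ), ψ₀ x = ψ x := fun x hx => by
    simp only [hψ₀def, max_eq_left hx]
  -- rewrite the integrands in terms of ψ₀
  have hrw1 : (fun t => V t * ψ t) = fun t => V t * ψ₀ t := by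
    funext t
    by_cases ht : t ∈ Icc (0:ℝ) M
    · rw [hψ₀eq t ht.1]
    · rw [hVsupp t ht]; ring
  have hrw2 : (fun t => V t * ψ t ^ 2) = fun t => (V t * ψ₀ t) * ψ₀ t := by
    funext t
    by_cases ht : t ∈ Icc (0:ℝ) M
    · rw [hψ₀eq t ht.1]; ring
    · rw [hVsupp t ht]; ring
  rw [hrw1] at hres
  rw [hrw2, hrw1]
  -- f, its measurability and boundedness
  have hfmeas : Measurable (fun t => V t * ψ₀ t) := hVmeas.mul hψ₀cont.measurable
  obtain ⟨K, hK⟩ := isCompact_Icc.exists_bound_of_continuousOn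
    (s := Icc (0:ℝ) M) hψ₀cont.continuousOn
  have hK0 : (0:ℝ) ≤ K := le_trans (norm_nonneg _) (hK 0 ⟨le_refl 0, hM.le⟩)
  have hCu : ∀ x, |V x * ψ₀ x| ≤ C * K := by
    intro x
    by_cases hx : x ∈ Icc (0:ℝ) M
    · rw [abs_mul]
      exact mul_le_mul (hC x) (by simpa using hK x hx) (abs_nonneg _) hC0
    · rw [hVsupp x hx]
      simpa using mul_nonneg hC0 hK0
  -- integrability of V * g for continuous g
  have hVg : ∀ g : ℝ → ℝ, Continuous g → Integrable (fun t => V t * g t) := by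
    intro g hg
    obtain ⟨K', hK'⟩ := isCompact_Icc.exists_bound_of_continuousOn
      (s := Icc (0:ℝ) M) hg.continuousOn
    have heq : (fun t => V t * g t) = (Icc (0:ℝ) M).indicator (fun t => V t * g t) := by
      funext t
      by_cases ht : t ∈ Icc (0:ℝ) M
      · simp [indicator, ht]
      · simp [indicator, ht, hVsupp t ht]
    rw [heq]
    refine IntegrableOn.integrable_indicator ?_ measurableSet_Icc
    refine Integrable.mono' (integrable_const (C * K'))
      (hVmeas.mul hg.measurable).aestronglyMeasurable ?_
    filter_upwards [ae_restrict_mem measurableSet_Icc] with t ht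
    calc ‖V t * g t‖ = |V t| * ‖g t‖ := by rw [norm_mul]; rfl
      _ ≤ C * K' := mul_le_mul (hC t) (hK' t ht) (norm_nonneg _) hC0
  have hfint : Integrable (fun t => V t * ψ₀ t) := hVg ψ₀ hψ₀cont
  have hfii : ∀ a b : ℝ, IntervalIntegrable (fun t => V t * ψ₀ t) volume a b :=
    fun a b => hfint.intervalIntegrable
  -- the primitive F and the function φ
  have hFcont : Continuous (fun x => ∫ s in (0:ℝ)..x, V s * ψ₀ s) :=
    intervalIntegral.continuous_primitive hfii 0
  have hφcont : Continuous (fun x => 1 + θ * ∫ s in (0:ℝ)..x, V s * ψ₀ s) :=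
    continuous_const.add (continuous_const.mul hFcont)
  -- ψ₀ is the primitive of φ
  have hψint : ∀ x ≥ (0:ℝ), ψ₀ x = ∫ t in (0:ℝ)..x, (1 + θ * ∫ s in (0:ℝ)..t, V s * ψ₀ s) := by
    intro x hx
    have h1 : (∫ t in (0:ℝ)..x, (1 + θ * ∫ s in (0:ℝ)..t, V s * ψ₀ s))
        = x + θ * ∫ t in (0:ℝ)..x, (∫ s in (0:ℝ)..t, V s * ψ₀ s) := by
      rw [intervalIntegral.integral_add (intervalIntegrable_const)
        (by exact (continuous_const.mul hFcont).intervalIntegrable _ _ :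
          IntervalIntegrable (fun t => θ * ∫ s in (0:ℝ)..t, V s * ψ₀ s) volume 0 x),
        intervalIntegral.integral_const, intervalIntegral.integral_const_mul]
      simp
    have h2 : (∫ t in (0:ℝ)..x, (∫ s in (0:ℝ)..t, V s * ψ₀ s))
        = ∫ s in (0:ℝ)..x, (x - s) * (V s * ψ₀ s) := by
      have hs := swap_aux x hx (fun s => V s * ψ₀ s) (fun _ => (1:ℝ)) hfmeas (C * K) hCu
        continuous_const
      simp only [mul_one] at hs
      rw [hs]
      refine intervalIntegral.integral_congr (fun s _ => ?_)
      rw [intervalIntegral.integral_const]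
      simp only [smul_eq_mul, mul_one]
      ring
    rw [h1, h2, hψ₀eq x hx, hψ x hx]
    have h3 : (∫ t in (0:ℝ)..x, (x - t) * V t * ψ t)
        = ∫ s in (0:ℝ)..x, (x - s) * (V s * ψ₀ s) := by
      refine intervalIntegral.integral_congr (fun t ht => ?_)
      rw [Set.uIcc_of_le hx] at ht
      rw [hψ₀eq t ht.1]
      ring
    rw [h3]
  have hψM := hψint M hM.le
  have hfψint : Integrable (fun s => (V s * ψ₀ s) * ψ₀ s) := by
    have := hVg (fun s => ψ₀ s * ψ₀ s) (hψ₀cont.mul hψ₀cont)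
    simpa [mul_assoc] using this
  -- key identity
  have hkey : (∫ t in (0:ℝ)..M, (1 + θ * ∫ s in (0:ℝ)..t, V s * ψ₀ s) ^ 2)
      = -θ * ∫ t in (0:ℝ)..M, (V t * ψ₀ t) * ψ₀ t := by
    have e1 : (∫ t in (0:ℝ)..M, (1 + θ * ∫ s in (0:ℝ)..t, V s * ψ₀ s) ^ 2)
        = (∫ t in (0:ℝ)..M, (1 + θ * ∫ s in (0:ℝ)..t, V s * ψ₀ s))
          + θ * ∫ t in (0:ℝ)..M, (∫ s in (0:ℝ)..t, V s * ψ₀ s)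
              * (1 + θ * ∫ s in (0:ℝ)..t, V s * ψ₀ s) := by
      rw [← intervalIntegral.integral_const_mul, ← intervalIntegral.integral_add
        (hφcont.intervalIntegrable _ _)
        (by exact (continuous_const.mul (hFcont.mul hφcont)).intervalIntegrable _ _ :
          IntervalIntegrable (fun t => θ * ((∫ s in (0:ℝ)..t, V s * ψ₀ s)
            * (1 + θ * ∫ s in (0:ℝ)..t, V s * ψ₀ s))) volume 0 M)]
      refine intervalIntegral.integral_congr (fun t _ => ?_)
      ring
    have e2 := swap_aux M hM.le (fun s => V s * ψ₀ s)
      (fun t => 1 + θ * ∫ s in (0:ℝ)..t, V s * ψ₀ s) hfmeas (C * K) hCu hφcont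
    have e3 : (∫ s in (0:ℝ)..M, (V s * ψ₀ s) * ∫ t in s..M, (1 + θ * ∫ r in (0:ℝ)..t, V r * ψ₀ r))
        = ψ₀ M * (∫ s in (0:ℝ)..M, V s * ψ₀ s) - ∫ s in (0:ℝ)..M, (V s * ψ₀ s) * ψ₀ s := by
      have hcong : ∀ s ∈ uIcc (0:ℝ) M,
          (V s * ψ₀ s) * (∫ t in s..M, (1 + θ * ∫ r in (0:ℝ)..t, V r * ψ₀ r))
            = ψ₀ M * (V s * ψ₀ s) - (V s * ψ₀ s) * ψ₀ s := by
        intro s hs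
        rw [Set.uIcc_of_le hM.le] at hs
        have h4 : (∫ t in s..M, (1 + θ * ∫ r in (0:ℝ)..t, V r * ψ₀ r)) = ψ₀ M - ψ₀ s := by
          rw [hψint M hM.le, hψint s hs.1]
          exact (intervalIntegral.integral_interval_sub_left (hφcont.intervalIntegrable _ _)
            (hφcont.intervalIntegrable _ _)).symm
        rw [h4]; ring
      rw [intervalIntegral.integral_congr hcong,
        intervalIntegral.integral_sub ((hfint.const_mul (ψ₀ M)).intervalIntegrable)
          (hfψint.intervalIntegrable),
        intervalIntegral.integral_const_mul]
    rw [e1, e2, e3, ← hψM]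
    linear_combination ψ₀ M * hres
  -- first part
  have hpart1 : (∫ t in (0:ℝ)..M, (V t * ψ₀ t) * ψ₀ t)
      = -(1 / θ) * ∫ t in (0:ℝ)..M, (1 + θ * ∫ s in (0:ℝ)..t, V s * ψ₀ s) ^ 2 := by
    rw [hkey]
    field_simp
  -- positivity of the square integral
  have hev : ∀ᶠ t in nhds (0:ℝ), (1/2:ℝ) < 1 + θ * ∫ s in (0:ℝ)..t, V s * ψ₀ s := by
    have hca : ContinuousAt (fun t => 1 + θ * ∫ s in (0:ℝ)..t, V s * ψ₀ s) 0 :=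
      hφcont.continuousAt
    have h0 : (1 + θ * ∫ s in (0:ℝ)..(0:ℝ), V s * ψ₀ s) = 1 := by simp
    have := hca.eventually_mem (Ioi_mem_nhds (by rw [h0]; norm_num : (1/2:ℝ) < _))
    simpa [mem_Ioi] using this
  obtain ⟨δ, hδpos, hδ⟩ := Metric.eventually_nhds_iff.mp hev
  set c := min (δ / 2) M with hcdef
  have hc0 : 0 < c := lt_min (by linarith) hM
  have hcM : c ≤ M := min_le_right _ _
  have hφsq : IntervalIntegrable (fun t => (1 + θ * ∫ s in (0:ℝ)..t, V s * ψ₀ s) ^ 2)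
      volume 0 M := ((hφcont.pow 2).intervalIntegrable _ _)
  have hsplit : (∫ t in (0:ℝ)..c, (1 + θ * ∫ s in (0:ℝ)..t, V s * ψ₀ s) ^ 2)
      + (∫ t in c..M, (1 + θ * ∫ s in (0:ℝ)..t, V s * ψ₀ s) ^ 2)
      = ∫ t in (0:ℝ)..M, (1 + θ * ∫ s in (0:ℝ)..t, V s * ψ₀ s) ^ 2 :=
    intervalIntegral.integral_add_adjacent_intervals ((hφcont.pow 2).intervalIntegrable _ _)
      ((hφcont.pow 2).intervalIntegrable _ _)
  have hlow : (∫ t in (0:ℝ)..c, (1/4:ℝ))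
      ≤ ∫ t in (0:ℝ)..c, (1 + θ * ∫ s in (0:ℝ)..t, V s * ψ₀ s) ^ 2 := by
    refine intervalIntegral.integral_mono_on hc0.le intervalIntegrable_const
      ((hφcont.pow 2).intervalIntegrable _ _) (fun t ht => ?_)
    have htδ : dist t 0 < δ := by
      rw [Real.dist_eq, sub_zero, abs_of_nonneg ht.1]
      have : t ≤ δ / 2 := le_trans ht.2 (min_le_left _ _)
      linarith
    have := hδ htδ
    nlinarith [this]
  have hlow2 : (0:ℝ) < ∫ t in (0:ℝ)..c, (1/4:ℝ) := by
    rw [intervalIntegral.integral_const]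
    simp only [smul_eq_mul, sub_zero]
    positivity
  have hp2 : (0:ℝ) ≤ ∫ t in c..M, (1 + θ * ∫ s in (0:ℝ)..t, V s * ψ₀ s) ^ 2 :=
    intervalIntegral.integral_nonneg hcM (fun t _ => sq_nonneg _)
  have hJpos : (0:ℝ) < ∫ t in (0:ℝ)..M, (1 + θ * ∫ s in (0:ℝ)..t, V s * ψ₀ s) ^ 2 := by
    rw [← hsplit]
    linarith
  refine ⟨hpart1, ?_⟩
  rw [hpart1]
  exact mul_ne_zero (neg_ne_zero.mpr (one_div_ne_zero hθ)) hJpos.ne'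
end

section
/- Fix M > 0 and a bounded measurable function V : ℝ → ℝ with V(x) = 0 for x ∉ [0, M], let θ ∈ ℝ with ψ_θ'(M) = 0, let ψ̃_θ be the unique continuous solution of ψ̃_θ(x) = 1 + θ ∫₀ˣ (x − t) V(t) ψ̃_θ(t) dt, and let g(x) := (∫₀ˣ V(t) ψ̃_θ(t) ψ_θ(t) dt) ψ_θ(x) − (∫₀ˣ V(t) ψ_θ(t)² dt) ψ̃_θ(x). Then g'(M) = (1/ψ_θ(M)) ∫₀ᴹ V(t) ψ_θ(t)² dt. -/
open MeasureTheory Set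

lemma swap_core {f g : ℝ → ℝ} {x : ℝ} (hx : 0 ≤ x)
    (hf : IntegrableOn f (Ioc 0 x)) (hg : IntegrableOn g (Ioc 0 x)) :
    ∫ t in Ioc (0:ℝ) x, (∫ u in Ioc (0:ℝ) t, f u) * g t
      = ∫ u in Ioc (0:ℝ) x, f u * ∫ t in Icc u x, g t := by
  obtain ⟨f', hf'def⟩ : ∃ f' : ℝ → ℝ, f' = (Ioc (0:ℝ) x).indicator f := ⟨_, rfl⟩
  obtain ⟨g', hg'def⟩ : ∃ g' : ℝ → ℝ, g' = (Ioc (0:ℝ) x).indicator g := ⟨_, rfl⟩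
  have hfm : ∀ u, u ∈ Ioc (0:ℝ) x → f' u = f u := fun u hu => by
    rw [hf'def]; exact indicator_of_mem hu f
  have hgm : ∀ t, t ∈ Ioc (0:ℝ) x → g' t = g t := fun t ht => by
    rw [hg'def]; exact indicator_of_mem ht g
  have hfnm : ∀ u, u ∉ Ioc (0:ℝ) x → f' u = 0 := fun u hu => by
    rw [hf'def]; exact indicator_of_notMem hu f
  have hf' : Integrable f' := by
    rw [hf'def]; exact (integrable_indicator_iff measurableSet_Ioc).2 hf
  have hg' : Integrable g' := by
    rw [hg'def]; exact (integrable_indicator_iff measurableSet_Ioc).2 hg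
  have L1 : ∫ t in Ioc (0:ℝ) x, (∫ u in Ioc (0:ℝ) t, f u) * g t
      = ∫ t in Ioc (0:ℝ) x, (∫ u in Ioc (0:ℝ) t, f' u) * g' t := by
    refine setIntegral_congr_fun measurableSet_Ioc (fun t ht => ?_)
    have h1 : ∫ u in Ioc (0:ℝ) t, f' u = ∫ u in Ioc (0:ℝ) t, f u :=
      setIntegral_congr_fun measurableSet_Ioc
        (fun u hu => hfm u ⟨hu.1, hu.2.trans ht.2⟩)
    rw [h1, hgm t ht]
  have R1 : ∫ u in Ioc (0:ℝ) x, f u * ∫ t in Icc u x, g t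
      = ∫ u in Ioc (0:ℝ) x, f' u * ∫ t in Icc u x, g' t := by
    refine setIntegral_congr_fun measurableSet_Ioc (fun u hu => ?_)
    have h1 : ∫ t in Icc u x, g' t = ∫ t in Icc u x, g t :=
      setIntegral_congr_fun measurableSet_Icc
        (fun t ht => hgm t ⟨lt_of_lt_of_le hu.1 ht.1, ht.2⟩)
    rw [h1, hfm u hu]
  rw [L1, R1]
  set Φ : ℝ → ℝ → ℝ := fun u t =>
    (Ioc (0:ℝ) t).indicator f' u * (Ioc (0:ℝ) x).indicator g' t with hΦdef
  have hΦval : ∀ u t, Φ u t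
      = (Ioc (0:ℝ) t).indicator f' u * (Ioc (0:ℝ) x).indicator g' t := fun _ _ => rfl
  set S : Set (ℝ × ℝ) := {p | 0 < p.1 ∧ p.1 ≤ p.2 ∧ 0 < p.2 ∧ p.2 ≤ x} with hSdef
  have hS : MeasurableSet S := by
    have : S = ({p : ℝ × ℝ | 0 < p.1} ∩ {p | p.1 ≤ p.2}) ∩
        ({p : ℝ × ℝ | 0 < p.2} ∩ {p | p.2 ≤ x}) := by
      ext p; simp [hSdef]; tauto
    rw [this]
    exact ((measurableSet_lt measurable_const measurable_fst).inter
        (measurableSet_le measurable_fst measurable_snd)).inter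
      ((measurableSet_lt measurable_const measurable_snd).inter
        (measurableSet_le measurable_snd measurable_const))
  have hΦeq : Function.uncurry Φ = S.indicator (fun p => f' p.1 * g' p.2) := by
    funext p
    show Φ p.1 p.2 = _
    by_cases hp : p ∈ S
    · have h1 : p.1 ∈ Ioc (0:ℝ) p.2 := ⟨hp.1, hp.2.1⟩
      have h2 : p.2 ∈ Ioc (0:ℝ) x := ⟨hp.2.2.1, hp.2.2.2⟩
      rw [hΦval, Set.indicator_of_mem hp, Set.indicator_of_mem h1,
        Set.indicator_of_mem h2]
    · rw [Set.indicator_of_notMem hp, hΦval]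
      by_cases h12 : p.1 ∈ Ioc (0:ℝ) p.2
      · have h2x : p.2 ∉ Ioc (0:ℝ) x := fun hc => hp ⟨h12.1, h12.2, hc.1, hc.2⟩
        rw [show (Ioc (0:ℝ) x).indicator g' p.2 = 0 from indicator_of_notMem h2x g',
          mul_zero]
      · rw [show (Ioc (0:ℝ) p.2).indicator f' p.1 = 0 from indicator_of_notMem h12 f',
          zero_mul]
  have hΦint : Integrable (Function.uncurry Φ) (volume.prod volume) := by
    rw [hΦeq]
    exact (Integrable.mul_prod hf' hg').indicator hS
  have hswap := MeasureTheory.integral_integral_swap hΦint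
  have e1 : ∀ t, (∫ u, Φ u t)
      = (Ioc (0:ℝ) x).indicator (fun t' => (∫ u in Ioc (0:ℝ) t', f' u) * g' t') t := by
    intro t
    by_cases ht : t ∈ Ioc (0:ℝ) x
    · rw [indicator_of_mem ht]
      calc ∫ u, Φ u t = ∫ u, (Ioc (0:ℝ) t).indicator f' u * g' t := by
            refine integral_congr_ae (Filter.Eventually.of_forall fun u => ?_)
            show Φ u t = (Ioc (0:ℝ) t).indicator f' u * g' t
            rw [hΦval, show (Ioc (0:ℝ) x).indicator g' t = g' t from indicator_of_mem ht g']
        _ = (∫ u, (Ioc (0:ℝ) t).indicator f' u) * g' t := by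
            rw [integral_mul_const]
        _ = (∫ u in Ioc (0:ℝ) t, f' u) * g' t := by
            rw [integral_indicator measurableSet_Ioc]
    · rw [indicator_of_notMem ht]
      have : ∀ u, Φ u t = 0 := fun u => by
        rw [hΦval, show (Ioc (0:ℝ) x).indicator g' t = 0 from indicator_of_notMem ht g',
          mul_zero]
      simp only [this, integral_zero]
  have e2 : ∀ u, (∫ t, Φ u t)
      = (Ioc (0:ℝ) x).indicator (fun u' => f' u' * ∫ t in Icc u' x, g' t) u := by
    intro u
    by_cases hu : u ∈ Ioc (0:ℝ) x
    · rw [indicator_of_mem hu]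
      have key : ∀ t, Φ u t = (Icc u x).indicator (fun t' => f' u * g' t') t := by
        intro t
        by_cases ht : t ∈ Icc u x
        · have h1 : u ∈ Ioc (0:ℝ) t := ⟨hu.1, ht.1⟩
          have h2 : t ∈ Ioc (0:ℝ) x := ⟨lt_of_lt_of_le hu.1 ht.1, ht.2⟩
          rw [indicator_of_mem ht, hΦval, indicator_of_mem h1, indicator_of_mem h2]
        · rw [indicator_of_notMem ht, hΦval]
          rcases not_and_or.1 (fun hc : u ≤ t ∧ t ≤ x => ht ⟨hc.1, hc.2⟩) with h | h
          · push_neg at h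
            rw [show (Ioc (0:ℝ) t).indicator f' u = 0 from
              indicator_of_notMem (fun hc => absurd hc.2 (not_le.2 h)) f', zero_mul]
          · push_neg at h
            rw [show (Ioc (0:ℝ) x).indicator g' t = 0 from
              indicator_of_notMem (fun hc => absurd hc.2 (not_le.2 h)) g', mul_zero]
      calc ∫ t, Φ u t = ∫ t, (Icc u x).indicator (fun t' => f' u * g' t') t := by
            simp only [key]
        _ = ∫ t in Icc u x, f' u * g' t := integral_indicator measurableSet_Icc
        _ = f' u * ∫ t in Icc u x, g' t := integral_const_mul _ _
    · rw [indicator_of_notMem hu]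
      have hfu : f' u = 0 := hfnm u hu
      have : ∀ t, Φ u t = 0 := by
        intro t
        rw [hΦval]
        by_cases h : u ∈ Ioc (0:ℝ) t
        · rw [show (Ioc (0:ℝ) t).indicator f' u = f' u from indicator_of_mem h f', hfu,
            zero_mul]
        · rw [show (Ioc (0:ℝ) t).indicator f' u = 0 from indicator_of_notMem h f',
            zero_mul]
      simp only [this, integral_zero]
  calc ∫ t in Ioc (0:ℝ) x, (∫ u in Ioc (0:ℝ) t, f' u) * g' t
      = ∫ t, (Ioc (0:ℝ) x).indicator
          (fun t' => (∫ u in Ioc (0:ℝ) t', f' u) * g' t') t :=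
        (integral_indicator measurableSet_Ioc).symm
    _ = ∫ t, ∫ u, Φ u t := by simp only [e1]
    _ = ∫ u, ∫ t, Φ u t := hswap.symm
    _ = ∫ u, (Ioc (0:ℝ) x).indicator (fun u' => f' u' * ∫ t in Icc u' x, g' t) u := by
        simp only [e2]
    _ = ∫ u in Ioc (0:ℝ) x, f' u * ∫ t in Icc u x, g' t :=
        integral_indicator measurableSet_Ioc

lemma integrable_Vmul {M : ℝ} {V w : ℝ → ℝ} (hVmeas : Measurable V)
    {C : ℝ} (hC : ∀ x, |V x| ≤ C)
    (hVsupp : ∀ x ∉ Icc (0:ℝ) M, V x = 0)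
    (hw : ContinuousOn w (Icc 0 M)) : Integrable (fun t => V t * w t) := by
  obtain ⟨K, hK⟩ := isCompact_Icc.exists_bound_of_continuousOn hw
  have hmeas : AEStronglyMeasurable (fun t => V t * w t) volume := by
    have h1 : AEMeasurable ((Icc (0:ℝ) M).indicator w) volume :=
      (aemeasurable_indicator_iff measurableSet_Icc).2 (hw.aemeasurable measurableSet_Icc)
    have heq : (fun t => V t * w t) = fun t => V t * (Icc (0:ℝ) M).indicator w t := by
      funext t
      by_cases ht : t ∈ Icc (0:ℝ) M
      · rw [indicator_of_mem ht]
      · rw [indicator_of_notMem ht, hVsupp t ht, zero_mul, zero_mul]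
    rw [heq]
    exact (hVmeas.aemeasurable.mul h1).aestronglyMeasurable
  refine Integrable.mono' (g := (Icc (0:ℝ) M).indicator fun _ => C * K) ?_ hmeas ?_
  · exact (integrable_indicator_iff measurableSet_Icc).2
      (integrableOn_const measure_Icc_lt_top.ne)
  · refine Filter.Eventually.of_forall fun t => ?_
    by_cases ht : t ∈ Icc (0:ℝ) M
    · rw [indicator_of_mem ht]
      rw [Real.norm_eq_abs, abs_mul]
      exact mul_le_mul (hC t) (hK t ht) (abs_nonneg _) ((abs_nonneg _).trans (hC t))
    · rw [indicator_of_notMem ht, hVsupp t ht, zero_mul, norm_zero]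

lemma prim_eq {f : ℝ → ℝ} (hf : Integrable f) {x : ℝ} (hx : 0 ≤ x) :
    ∫ t in (0:ℝ)..x, (x - t) * f t = ∫ t in (0:ℝ)..x, ∫ u in (0:ℝ)..t, f u := by
  rw [intervalIntegral.integral_of_le hx, intervalIntegral.integral_of_le hx]
  have h1 : ∫ t in Ioc (0:ℝ) x, (∫ u in (0:ℝ)..t, f u)
      = ∫ t in Ioc (0:ℝ) x, (∫ u in Ioc (0:ℝ) t, f u) * (1:ℝ) := by
    refine setIntegral_congr_fun measurableSet_Ioc (fun t ht => ?_)
    rw [intervalIntegral.integral_of_le ht.1.le, mul_one]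
  rw [h1, swap_core hx hf.integrableOn (integrableOn_const measure_Ioc_lt_top.ne)]
  refine (setIntegral_congr_fun measurableSet_Ioc (fun u hu => ?_)).symm
  rw [setIntegral_const, Real.volume_real_Icc_of_le hu.2, smul_eq_mul]
  ring

lemma partsA {f g : ℝ → ℝ} {x : ℝ} (hx : 0 ≤ x)
    (hf : Integrable f) (hgc : Continuous g) :
    (∫ t in (0:ℝ)..x, f t) * (∫ t in (0:ℝ)..x, g t)
      = (∫ t in (0:ℝ)..x, (∫ u in (0:ℝ)..t, f u) * g t)
        + (∫ t in (0:ℝ)..x, f t * (∫ u in (0:ℝ)..t, g u)) := by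
  have hfI : IntegrableOn f (Ioc 0 x) := hf.integrableOn
  have hgI : IntegrableOn g (Ioc 0 x) := hgc.integrableOn_Ioc
  have hGc : Continuous fun u => ∫ s in (0:ℝ)..u, g s :=
    intervalIntegral.continuous_primitive (fun a b => hgc.intervalIntegrable a b) 0
  -- integrability of f * G on Ioc 0 x
  have hfG : IntegrableOn (fun u => f u * ∫ s in (0:ℝ)..u, g s) (Ioc 0 x) := by
    obtain ⟨c, hc⟩ := (isCompact_Icc (a := (0:ℝ)) (b := x)).exists_bound_of_continuousOn
      hGc.continuousOn
    have h1 : IntegrableOn (fun u => (∫ s in (0:ℝ)..u, g s) * f u) (Ioc 0 x) := by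
      refine Integrable.bdd_mul (c := c) hfI
        (hGc.aestronglyMeasurable.restrict) ?_
      filter_upwards [ae_restrict_mem measurableSet_Ioc] with u hu
      exact hc u (Ioc_subset_Icc_self hu)
    exact h1.congr (Filter.Eventually.of_forall fun u => mul_comm _ _)
  have t1 : (∫ t in (0:ℝ)..x, (∫ u in (0:ℝ)..t, f u) * g t)
      = (∫ t in (0:ℝ)..x, g t) * (∫ t in (0:ℝ)..x, f t)
        - ∫ t in (0:ℝ)..x, f t * (∫ u in (0:ℝ)..t, g u) := by
    simp only [intervalIntegral.integral_of_le hx]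
    have e0 : ∫ t in Ioc (0:ℝ) x, (∫ u in (0:ℝ)..t, f u) * g t
        = ∫ t in Ioc (0:ℝ) x, (∫ u in Ioc (0:ℝ) t, f u) * g t :=
      setIntegral_congr_fun measurableSet_Ioc
        (fun t ht => by rw [intervalIntegral.integral_of_le ht.1.le])
    rw [e0, swap_core hx hfI hgI]
    have e1 : ∫ u in Ioc (0:ℝ) x, f u * ∫ t in Icc u x, g t
        = ∫ u in Ioc (0:ℝ) x,
            (f u * (∫ t in Ioc (0:ℝ) x, g t) - f u * ∫ s in (0:ℝ)..u, g s) := by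
      refine setIntegral_congr_fun measurableSet_Ioc (fun u hu => ?_)
      have h1 : ∫ t in Icc u x, g t = ∫ t in u..x, g t := by
        rw [intervalIntegral.integral_of_le hu.2, integral_Icc_eq_integral_Ioc]
      have h2 : (∫ t in (0:ℝ)..u, g t) + ∫ t in u..x, g t = ∫ t in Ioc (0:ℝ) x, g t := by
        rw [← intervalIntegral.integral_of_le hx]
        exact intervalIntegral.integral_add_adjacent_intervals
          (hgc.intervalIntegrable _ _) (hgc.intervalIntegrable _ _)
      rw [h1, eq_sub_of_add_eq' h2, mul_sub]
    rw [e1, integral_sub (hfI.mul_const _) hfG, integral_mul_const]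
    ring
  rw [t1]; ring

/-- If `ψ_θ'(M) = 0`, the variation-of-constants function
`g(x) = (∫₀ˣ V ψ̃_θ ψ_θ) ψ_θ(x) − (∫₀ˣ V ψ_θ²) ψ̃_θ(x)` satisfies
`g'(M) = (1/ψ_θ(M)) ∫₀ᴹ V ψ_θ²`. -/
theorem derivative_of_g_at_M
    (M : ℝ) (hM : 0 < M) (V : ℝ → ℝ) (hVmeas : Measurable V)
    (hVbd : ∃ C : ℝ, ∀ x : ℝ, |V x| ≤ C)
    (hVsupp : ∀ x : ℝ, x ∉ Set.Icc 0 M → V x = 0)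
    (θ : ℝ) (ψ ψt : ℝ → ℝ)
    (hψc : ContinuousOn ψ (Set.Ici 0))
    (hψ : ∀ x ≥ (0:ℝ), ψ x = x + θ * ∫ t in (0:ℝ)..x, (x - t) * V t * ψ t)
    (hψtc : ContinuousOn ψt (Set.Ici 0))
    (hψt : ∀ x ≥ (0:ℝ), ψt x = 1 + θ * ∫ t in (0:ℝ)..x, (x - t) * V t * ψt t)
    (hres : 1 + θ * ∫ t in (0:ℝ)..M, V t * ψ t = 0)
    (g : ℝ → ℝ)
    (hg : ∀ x : ℝ,
      g x = (∫ t in (0:ℝ)..x, V t * ψt t * ψ t) * ψ x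
        - (∫ t in (0:ℝ)..x, V t * ψ t ^ 2) * ψt x) :
    HasDerivAt g ((1 / ψ M) * ∫ t in (0:ℝ)..M, V t * ψ t ^ 2) M := by
  obtain ⟨C, hC⟩ := hVbd
  have hsub : Icc (0:ℝ) M ⊆ Ici 0 := fun t ht => ht.1
  have hInt : ∀ w : ℝ → ℝ, ContinuousOn w (Ici 0) → Integrable (fun t => V t * w t) :=
    fun w hw => integrable_Vmul hVmeas hC hVsupp (hw.mono hsub)
  -- basic integrable functions
  have haI : Integrable (fun t => V t * ψ t) := hInt ψ hψc
  have hbI : Integrable (fun t => V t * ψt t) := hInt ψt hψtc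
  have hf1I : Integrable (fun t => V t * (ψt t * ψ t)) := hInt _ (hψtc.mul hψc)
  have hf2I : Integrable (fun t => V t * (ψ t * ψ t)) := hInt _ (hψc.mul hψc)
  have hf1ψI : Integrable (fun t => (V t * (ψt t * ψ t)) * ψ t) := by
    have := hInt _ ((hψtc.mul hψc).mul hψc)
    exact this.congr (Filter.Eventually.of_forall fun t => by simp only [Pi.mul_apply]; ring)
  have hf2ψtI : Integrable (fun t => (V t * (ψ t * ψ t)) * ψt t) := by
    have := hInt _ ((hψc.mul hψc).mul hψtc)
    exact this.congr (Filter.Eventually.of_forall fun t => by simp only [Pi.mul_apply]; ring)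
  have haψtI : Integrable (fun t => (V t * ψ t) * ψt t) := by
    have := hInt _ (hψc.mul hψtc)
    exact this.congr (Filter.Eventually.of_forall fun t => by simp only [Pi.mul_apply]; ring)
  have hbψI : Integrable (fun t => (V t * ψt t) * ψ t) := by
    have := hInt _ (hψtc.mul hψc)
    exact this.congr (Filter.Eventually.of_forall fun t => by simp only [Pi.mul_apply]; ring)
  -- primitives
  set p : ℝ → ℝ := fun t => 1 + θ * ∫ u in (0:ℝ)..t, V u * ψ u with hp_def
  set q : ℝ → ℝ := fun t => θ * ∫ u in (0:ℝ)..t, V u * ψt u with hq_def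
  have hpc : Continuous p := continuous_const.add (continuous_const.mul
    (haI.continuous_primitive 0))
  have hqc : Continuous q := continuous_const.mul (hbI.continuous_primitive 0)
  set F : ℝ → ℝ := fun t => ∫ u in (0:ℝ)..t, V u * (ψt u * ψ u) with hF_def
  set G : ℝ → ℝ := fun t => ∫ u in (0:ℝ)..t, V u * (ψ u * ψ u) with hG_def
  have hFc : Continuous F := hf1I.continuous_primitive 0
  have hGc : Continuous G := hf2I.continuous_primitive 0
  -- ψ and ψt as primitives of p and q
  have hψP : ∀ x ≥ (0:ℝ), ψ x = ∫ t in (0:ℝ)..x, p t := by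
    intro x hx
    have h1 : ∫ t in (0:ℝ)..x, (x - t) * V t * ψ t
        = ∫ t in (0:ℝ)..x, (x - t) * (V t * ψ t) :=
      intervalIntegral.integral_congr (fun t _ => by ring)
    have h2 : ∫ t in (0:ℝ)..x, p t
        = x + θ * ∫ t in (0:ℝ)..x, ∫ u in (0:ℝ)..t, V u * ψ u := by
      rw [hp_def]
      rw [intervalIntegral.integral_add (f := fun _ => (1:ℝ))
        (g := fun t => θ * ∫ u in (0:ℝ)..t, V u * ψ u) (intervalIntegrable_const)
        ((continuous_const.mul (haI.continuous_primitive 0)).intervalIntegrable _ _),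
        intervalIntegral.integral_const, intervalIntegral.integral_const_mul]
      simp
    rw [hψ x hx, h1, prim_eq haI hx, h2]
  have hψtP : ∀ x ≥ (0:ℝ), ψt x = 1 + ∫ t in (0:ℝ)..x, q t := by
    intro x hx
    have h1 : ∫ t in (0:ℝ)..x, (x - t) * V t * ψt t
        = ∫ t in (0:ℝ)..x, (x - t) * (V t * ψt t) :=
      intervalIntegral.integral_congr (fun t _ => by ring)
    have h2 : ∫ t in (0:ℝ)..x, q t
        = θ * ∫ t in (0:ℝ)..x, ∫ u in (0:ℝ)..t, V u * ψt u := by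
      rw [hq_def, intervalIntegral.integral_const_mul]
    rw [hψt x hx, h1, prim_eq hbI hx, h2]
  -- identity for g
  have hgid : ∀ x ≥ (0:ℝ), g x = ∫ t in (0:ℝ)..x, (F t * p t - G t * q t) := by
    intro x hx
    have e1 : F x * ψ x = (∫ t in (0:ℝ)..x, F t * p t)
        + ∫ t in (0:ℝ)..x, (V t * (ψt t * ψ t)) * ψ t := by
      rw [hψP x hx, partsA hx hf1I hpc]
      congr 1
      refine intervalIntegral.integral_congr (fun t ht => ?_)
      have ht' : 0 ≤ t := by rw [uIcc_of_le hx] at ht; exact ht.1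
      rw [← hψP t ht']
    have e2 : G x * ψt x = (∫ t in (0:ℝ)..x, G t * q t)
        + ∫ t in (0:ℝ)..x, (V t * (ψ t * ψ t)) * ψt t := by
      rw [hψtP x hx, mul_add, mul_one, partsA hx hf2I hqc]
      have e3 : ∫ t in (0:ℝ)..x, (V t * (ψ t * ψ t)) * (∫ u in (0:ℝ)..t, q u)
          = (∫ t in (0:ℝ)..x, (V t * (ψ t * ψ t)) * ψt t)
            - ∫ t in (0:ℝ)..x, V t * (ψ t * ψ t) := by
        have h4 : ∀ t ∈ uIcc (0:ℝ) x, (V t * (ψ t * ψ t)) * (∫ u in (0:ℝ)..t, q u)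
            = (V t * (ψ t * ψ t)) * ψt t - V t * (ψ t * ψ t) := by
          intro t ht
          have ht' : 0 ≤ t := by rw [uIcc_of_le hx] at ht; exact ht.1
          rw [hψtP t ht']; ring
        rw [intervalIntegral.integral_congr h4,
          intervalIntegral.integral_sub (hf2ψtI.intervalIntegrable)
            (hf2I.intervalIntegrable)]
      rw [e3, hG_def]
      ring
    have hgx : g x = F x * ψ x - G x * ψt x := by
      rw [hg x]
      congr 2
      · exact intervalIntegral.integral_congr (fun t _ => by ring)
      · exact intervalIntegral.integral_congr (fun t _ => by ring)
    rw [hgx, e1, e2,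
      intervalIntegral.integral_sub (f := fun t => F t * p t) (g := fun t => G t * q t)
        ((hFc.mul hpc).intervalIntegrable _ _)
        ((hGc.mul hqc).intervalIntegrable _ _)]
    have : ∫ t in (0:ℝ)..x, (V t * (ψt t * ψ t)) * ψ t
        = ∫ t in (0:ℝ)..x, (V t * (ψ t * ψ t)) * ψt t :=
      intervalIntegral.integral_congr (fun t _ => by ring)
    rw [this]; ring
  -- Wronskian at M
  have hM' : (0:ℝ) ≤ M := hM.le
  have w1 : ψ M * q M = (∫ t in (0:ℝ)..M, q t * p t)
      + θ * ∫ t in (0:ℝ)..M, (V t * ψt t) * ψ t := by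
    rw [hψP M hM']
    have hparts := partsA hM' hbI hpc
    calc (∫ t in (0:ℝ)..M, p t) * q M
        = θ * ((∫ t in (0:ℝ)..M, V t * ψt t) * (∫ t in (0:ℝ)..M, p t)) := by
          rw [hq_def]; ring
      _ = θ * (∫ t in (0:ℝ)..M, (∫ u in (0:ℝ)..t, V u * ψt u) * p t)
          + θ * (∫ t in (0:ℝ)..M, (V t * ψt t) * (∫ u in (0:ℝ)..t, p u)) := by
          rw [hparts]; ring
      _ = (∫ t in (0:ℝ)..M, q t * p t)
          + θ * ∫ t in (0:ℝ)..M, (V t * ψt t) * ψ t := by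
          congr 1
          · rw [← intervalIntegral.integral_const_mul]
            refine intervalIntegral.integral_congr (fun t _ => ?_)
            rw [hq_def]; ring
          · congr 1
            refine intervalIntegral.integral_congr (fun t ht => ?_)
            have ht' : 0 ≤ t := by rw [uIcc_of_le hM'] at ht; exact ht.1
            rw [← hψP t ht']
  have w2 : p M * ψt M = 1 + (∫ t in (0:ℝ)..M, q t * p t)
      + θ * ∫ t in (0:ℝ)..M, (V t * ψ t) * ψt t := by
    rw [hψtP M hM', hp_def]
    have hparts := partsA hM' haI hqc
    have hq1 : θ * (∫ t in (0:ℝ)..M, (∫ u in (0:ℝ)..t, V u * ψ u) * q t)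
        = (∫ t in (0:ℝ)..M, (p t - 1) * q t) := by
      rw [← intervalIntegral.integral_const_mul]
      refine intervalIntegral.integral_congr (fun t _ => ?_)
      rw [hp_def]; ring
    have hq2 : ∫ t in (0:ℝ)..M, (V t * ψ t) * (∫ u in (0:ℝ)..t, q u)
        = (∫ t in (0:ℝ)..M, (V t * ψ t) * ψt t) - ∫ t in (0:ℝ)..M, V t * ψ t := by
      have h4 : ∀ t ∈ uIcc (0:ℝ) M, (V t * ψ t) * (∫ u in (0:ℝ)..t, q u)
          = (V t * ψ t) * ψt t - V t * ψ t := by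
        intro t ht
        have ht' : 0 ≤ t := by rw [uIcc_of_le hM'] at ht; exact ht.1
        rw [hψtP t ht']; ring
      rw [intervalIntegral.integral_congr h4,
        intervalIntegral.integral_sub (haψtI.intervalIntegrable)
          (haI.intervalIntegrable)]
    have hsplit : ∫ t in (0:ℝ)..M, (p t - 1) * q t
        = (∫ t in (0:ℝ)..M, p t * q t) - ∫ t in (0:ℝ)..M, q t := by
      have h5 : ∫ t in (0:ℝ)..M, (p t * q t - q t)
          = (∫ t in (0:ℝ)..M, p t * q t) - ∫ t in (0:ℝ)..M, q t :=
        intervalIntegral.integral_sub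
          (((hpc.mul hqc).intervalIntegrable (0:ℝ) M : IntervalIntegrable _ volume 0 M))
          ((hqc.intervalIntegrable (0:ℝ) M : IntervalIntegrable _ volume 0 M))
      rw [← h5]
      exact intervalIntegral.integral_congr (fun t _ => by ring)
    have hpq : ∫ t in (0:ℝ)..M, q t * p t = ∫ t in (0:ℝ)..M, p t * q t :=
      intervalIntegral.integral_congr (fun t _ => by ring)
    calc (1 + θ * ∫ u in (0:ℝ)..M, V u * ψ u) * (1 + ∫ t in (0:ℝ)..M, q t)
        = 1 + (∫ t in (0:ℝ)..M, q t) + θ * (∫ t in (0:ℝ)..M, V t * ψ t)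
          + θ * ((∫ t in (0:ℝ)..M, V t * ψ t) * (∫ t in (0:ℝ)..M, q t)) := by ring
      _ = 1 + (∫ t in (0:ℝ)..M, q t) + θ * (∫ t in (0:ℝ)..M, V t * ψ t)
          + (θ * (∫ t in (0:ℝ)..M, (∫ u in (0:ℝ)..t, V u * ψ u) * q t)
             + θ * ∫ t in (0:ℝ)..M, (V t * ψ t) * (∫ u in (0:ℝ)..t, q u)) := by
          rw [hparts]; ring
      _ = 1 + (∫ t in (0:ℝ)..M, q t * p t)
          + θ * ∫ t in (0:ℝ)..M, (V t * ψ t) * ψt t := by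
          rw [hq1, hq2, hsplit, hpq]; ring
  have hbψaψt : ∫ t in (0:ℝ)..M, (V t * ψt t) * ψ t
      = ∫ t in (0:ℝ)..M, (V t * ψ t) * ψt t :=
    intervalIntegral.integral_congr (fun t _ => by ring)
  have W : ψ M * q M - p M * ψt M = -1 := by
    rw [w1, w2, hbψaψt]; ring
  have hpM : p M = 0 := hres
  have hψqM : ψ M * q M = -1 := by rw [hpM] at W; linarith [W]
  have hψM : ψ M ≠ 0 := by
    intro h
    rw [h, zero_mul] at hψqM
    norm_num at hψqM
  have hqM : q M = -(1 / ψ M) := by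
    field_simp
    linarith [hψqM]
  -- conclusion
  have hcont : Continuous fun t => F t * p t - G t * q t :=
    (hFc.mul hpc).sub (hGc.mul hqc)
  have hΦd : HasDerivAt (fun x => ∫ t in (0:ℝ)..x, (F t * p t - G t * q t))
      (F M * p M - G M * q M) M :=
    intervalIntegral.integral_hasDerivAt_right (hcont.intervalIntegrable _ _)
      (hcont.stronglyMeasurable.stronglyMeasurableAtFilter) hcont.continuousAt
  have hev : g =ᶠ[nhds M] fun x => ∫ t in (0:ℝ)..x, (F t * p t - G t * q t) := by
    filter_upwards [eventually_gt_nhds hM] with x hx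
    exact hgid x hx.le
  have hder : HasDerivAt g (F M * p M - G M * q M) M := hΦd.congr_of_eventuallyEq hev
  have hval : F M * p M - G M * q M = (1 / ψ M) * ∫ t in (0:ℝ)..M, V t * ψ t ^ 2 := by
    rw [hpM, hqM]
    have : ∫ t in (0:ℝ)..M, V t * ψ t ^ 2 = G M :=
      intervalIntegral.integral_congr (fun t _ => by ring)
    rw [this]; ring
  rw [← hval]
  exact hder
end

section
/- Fix M > 0 and a bounded measurable function V : ℝ → ℝ with V(x) = 0 for x ∉ [0, M], and let θ ∈ ℝ with ψ_θ'(M) = 0. Define Ψ : ℝ³ \ {0} → ℝ by Ψ(x) := ψ_θ(|x|)/|x|. Then: (a) for every δ > 0, ∫_{ℝ³} |Ψ(x)|² (1 + |x|²)^{−(1+δ)/2} dx < ∞; and (b) ∫_{ℝ³} |Ψ(x)|² dx = ∞, i.e. Ψ ∉ L²(ℝ³). -/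
open MeasureTheory Set Metric
open scoped ENNReal

local notation "dim" => Module.finrank ℝ

lemma lintegral_norm_eq {E : Type*} [NormedAddCommGroup E] [NormedSpace ℝ E]
    [MeasurableSpace E] [BorelSpace E] [Nontrivial E] [FiniteDimensional ℝ E]
    (μ : Measure E) [μ.IsAddHaarMeasure] (g : ℝ → ℝ≥0∞) (hg : Measurable g) :
    ∫⁻ x, g ‖x‖ ∂μ =
      μ.toSphere univ * ∫⁻ r in Ioi (0:ℝ), ENNReal.ofReal (r ^ (dim E - 1)) * g r := by
  have h1 : ∫⁻ x : ({(0:E)}ᶜ : Set E), g ‖x.1‖ ∂(μ.comap (↑)) = ∫⁻ x, g ‖x‖ ∂μ := by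
    have := lintegral_subtype_comap (μ := μ) (measurableSet_singleton (0:E)).compl
      (fun x => g ‖x‖)
    rwa [MeasureTheory.restrict_compl_singleton] at this
  rw [← h1]
  have h2 : ∫⁻ x : ({(0:E)}ᶜ : Set E), g ‖x.1‖ ∂(μ.comap (↑)) =
      ∫⁻ p : sphere (0:E) 1 × Ioi (0:ℝ), g p.2
        ∂μ.toSphere.prod (.volumeIoiPow (dim E - 1)) := by
    rw [← μ.measurePreserving_homeomorphUnitSphereProd.lintegral_comp_emb
      (Homeomorph.measurableEmbedding _) (fun p => g p.2)]
    congr 1; funext x; simp [homeomorphUnitSphereProd]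
  rw [h2]
  have hmeas : Measurable (fun p : sphere (0:E) 1 × Ioi (0:ℝ) => g p.2) :=
    hg.comp (measurable_subtype_coe.comp measurable_snd)
  rw [lintegral_prod _ hmeas.aemeasurable]
  have h4 : ∫⁻ r : Ioi (0:ℝ), g r ∂(Measure.volumeIoiPow (dim E - 1)) =
      ∫⁻ r in Ioi (0:ℝ), ENNReal.ofReal (r ^ (dim E - 1)) * g r := by
    rw [Measure.volumeIoiPow]
    rw [lintegral_withDensity_eq_lintegral_mul _
      (show Measurable (fun r : Ioi (0:ℝ) => ENNReal.ofReal (r.1 ^ (dim E - 1))) by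
        measurability)
      (show Measurable (fun r : Ioi (0:ℝ) => g ↑r) from hg.comp measurable_subtype_coe)]
    have := lintegral_subtype_comap (μ := (volume : Measure ℝ)) (measurableSet_Ioi (a := (0:ℝ)))
      (fun r => ENNReal.ofReal (r ^ (dim E - 1)) * g r)
    rw [← this]
    rfl
  have h3 : ∫⁻ _x : sphere (0:E) 1,
      (∫⁻ r : Ioi (0:ℝ), g r ∂(Measure.volumeIoiPow (dim E - 1))) ∂μ.toSphere =
      μ.toSphere univ * ∫⁻ r : Ioi (0:ℝ), g r ∂(Measure.volumeIoiPow (dim E - 1)) := by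
    rw [lintegral_const, mul_comm]
  exact h3.trans (by rw [h4])

open intervalIntegral in
private lemma VmulInt {V : ℝ → ℝ} (hV : Measurable V) {C : ℝ} (hC : ∀ x, |V x| ≤ C)
    {g h : ℝ → ℝ} (hg : Continuous g) (hh : Continuous h) (a b : ℝ) :
    IntervalIntegrable (fun t => g t * V t * h t) volume a b := by
  rw [intervalIntegrable_iff]
  obtain ⟨D1, hD1⟩ := isCompact_uIcc.exists_bound_of_continuousOn (hg.continuousOn (s := uIcc a b))
  obtain ⟨D2, hD2⟩ := isCompact_uIcc.exists_bound_of_continuousOn (hh.continuousOn (s := uIcc a b))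
  have hD1n : 0 ≤ D1 := le_trans (norm_nonneg _) (hD1 a left_mem_uIcc)
  have hD2n : 0 ≤ D2 := le_trans (norm_nonneg _) (hD2 a left_mem_uIcc)
  have hCn : 0 ≤ C := le_trans (abs_nonneg _) (hC 0)
  refine Measure.integrableOn_of_bounded (M := D1 * C * D2) measure_Ioc_lt_top.ne
    (((hg.measurable.mul hV).mul hh.measurable).aestronglyMeasurable) ?_
  filter_upwards [ae_restrict_mem measurableSet_Ioc] with t ht
  have ht' : t ∈ uIcc a b := uIoc_subset_uIcc ht
  have : ‖g t * V t * h t‖ = ‖g t‖ * |V t| * ‖h t‖ := by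
    simp [abs_mul, Real.norm_eq_abs]
  rw [this]
  calc ‖g t‖ * |V t| * ‖h t‖ ≤ D1 * C * ‖h t‖ := by
        apply mul_le_mul_of_nonneg_right _ (norm_nonneg _)
        exact mul_le_mul (hD1 t ht') (hC t) (abs_nonneg _) hD1n
    _ ≤ D1 * C * D2 := by
        apply mul_le_mul_of_nonneg_left (hD2 t ht') (by positivity)

open intervalIntegral

section core
variable {M θ C : ℝ} {V f : ℝ → ℝ}
  (hM : 0 < M) (hV : Measurable V) (hC : ∀ x, |V x| ≤ C)
  (hsupp : ∀ x : ℝ, x ∉ Set.Icc 0 M → V x = 0)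
  (hf : Continuous f)
  (hv : ∀ x, 0 ≤ x → f x = x + θ * ∫ t in (0:ℝ)..x, (x - t) * V t * f t)
  (hres : 1 + θ * ∫ t in (0:ℝ)..M, V t * f t = 0)

private lemma II (hV : Measurable V) (hC : ∀ x, |V x| ≤ C) (hf : Continuous f)
    (g : ℝ → ℝ) (hg : Continuous g) (a b : ℝ) :
    IntervalIntegrable (fun t => g t * V t * f t) volume a b :=
  VmulInt hV hC hg hf a b

private lemma IIabs (hV : Measurable V) (hC : ∀ x, |V x| ≤ C) (hf : Continuous f)
    (g : ℝ → ℝ) (hg : Continuous g) (a b : ℝ) :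
    IntervalIntegrable (fun t => |g t * V t * f t|) volume a b := by
  have := II hV hC hf g hg a b
  rw [intervalIntegrable_iff] at this ⊢
  exact this.abs

include hV hC hsupp hf hv hres

/-- splitting: for x ∈ [0,M], f x - f M = θ ∫ₓ^M (t-x) V f. -/
private lemma rep : ∀ x, 0 ≤ x → x ≤ M →
    f x = f M + θ * ∫ t in x..M, (t - x) * V t * f t := by
  intro x hx0 hxM
  have hM0 : (0:ℝ) ≤ M := le_trans hx0 hxM
  have e1 := hv x hx0
  have e2 := hv M hM0
  -- adjacent intervals
  have hadj : (∫ t in (0:ℝ)..x, (x - t) * V t * f t)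
      + (∫ t in x..M, (x - t) * V t * f t) = ∫ t in (0:ℝ)..M, (x - t) * V t * f t :=
    integral_add_adjacent_intervals (II hV hC hf _ (by fun_prop) 0 x)
      (II hV hC hf _ (by fun_prop) x M)
  -- pointwise algebra on [0,M]
  have e3 : (∫ t in (0:ℝ)..M, (x - t) * V t * f t)
      = (∫ t in (0:ℝ)..M, (M - t) * V t * f t)
        + (x - M) * ∫ t in (0:ℝ)..M, (1:ℝ) * V t * f t := by
    rw [← intervalIntegral.integral_const_mul, ← integral_add (II hV hC hf _ (by fun_prop) 0 M)
      ((II hV hC hf _ (by fun_prop) 0 M).const_mul (x - M))]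
    apply integral_congr
    intro t _
    ring
  have e4 : (∫ t in x..M, (x - t) * V t * f t)
      = - ∫ t in x..M, (t - x) * V t * f t := by
    rw [← intervalIntegral.integral_neg]
    apply integral_congr
    intro t _
    ring
  have e5 : (∫ t in (0:ℝ)..M, (1:ℝ) * V t * f t) = ∫ t in (0:ℝ)..M, V t * f t := by
    apply integral_congr; intro t _; ring
  rw [e5] at e3
  rw [e4] at hadj
  linear_combination e1 - e2 + θ * hadj + θ * e3 + (x - M) * hres

include hM in
/-- f is constant on [M,∞). -/
private lemma const_after : ∀ x, M ≤ x → f x = f M := by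
  have hM0 : (0:ℝ) ≤ M := le_of_lt hM
  have key : ∀ x, M ≤ x → f x = - θ * ∫ t in (0:ℝ)..M, t * V t * f t := by
    intro x hMx
    have hx0 : (0:ℝ) ≤ x := le_trans hM0 hMx
    have e1 := hv x hx0
    have hadj : (∫ t in (0:ℝ)..M, (x - t) * V t * f t)
        + (∫ t in M..x, (x - t) * V t * f t) = ∫ t in (0:ℝ)..x, (x - t) * V t * f t :=
      integral_add_adjacent_intervals (II hV hC hf _ (by fun_prop) 0 M)
        (II hV hC hf _ (by fun_prop) M x)
    have hzero : (∫ t in M..x, (x - t) * V t * f t) = 0 := by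
      rw [integral_of_le hMx]
      rw [setIntegral_congr_fun measurableSet_Ioc
        (g := fun _ => (0:ℝ)) (fun t ht => by
          rw [hsupp t (fun h2 => absurd h2.2 (not_le.mpr ht.1))]; ring)]
      simp
    have e3 : (∫ t in (0:ℝ)..M, (x - t) * V t * f t)
        = x * (∫ t in (0:ℝ)..M, (1:ℝ) * V t * f t)
          - ∫ t in (0:ℝ)..M, t * V t * f t := by
      rw [← intervalIntegral.integral_const_mul, ← integral_sub
        ((II hV hC hf _ (by fun_prop) 0 M).const_mul x)
        (II hV hC hf _ (by fun_prop) 0 M)]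
      apply integral_congr; intro t _; ring
    have e5 : (∫ t in (0:ℝ)..M, (1:ℝ) * V t * f t) = ∫ t in (0:ℝ)..M, V t * f t := by
      apply integral_congr; intro t _; ring
    rw [e5] at e3
    rw [hzero] at hadj
    linear_combination e1 - θ * hadj + θ * e3 + x * hres
  intro x hMx
  rw [key x hMx, key M le_rfl]

include hM in
/-- f M ≠ 0. -/
private lemma fM_ne : f M ≠ 0 := by
  intro hc0
  have hM0 : (0:ℝ) ≤ M := le_of_lt hM
  have hCn : 0 ≤ C := le_trans (abs_nonneg _) (hC 0)
  set K : ℝ := |θ| * (C * M) with hK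
  have hKn : 0 ≤ K := by positivity
  set A : ℝ := ∫ t in (0:ℝ)..M, |f t| with hA
  set F : ℝ → ℝ := fun x => ∫ t in (0:ℝ)..x, |f t| with hF
  have habs : Continuous fun t => |f t| := hf.abs
  -- the key integral inequality
  have hineq : ∀ x, 0 ≤ x → x ≤ M → |f x| ≤ K * (A - F x) := by
    intro x hx0 hxM
    have hsplit : F x + (∫ t in x..M, |f t|) = A :=
      integral_add_adjacent_intervals (habs.intervalIntegrable _ _)
        (habs.intervalIntegrable _ _)
    have hrep := rep hV hC hsupp hf hv hres x hx0 hxM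
    rw [hc0] at hrep
    have h1 : |f x| ≤ |θ| * |∫ t in x..M, (t - x) * V t * f t| := by
      rw [hrep, zero_add, abs_mul]
    have h2 : |∫ t in x..M, (t - x) * V t * f t|
        ≤ ∫ t in x..M, |(t - x) * V t * f t| :=
      intervalIntegral.abs_integral_le_integral_abs hxM
    have h3 : (∫ t in x..M, |(t - x) * V t * f t|)
        ≤ ∫ t in x..M, (C * M) * |f t| := by
      apply integral_mono_on hxM (IIabs hV hC hf _ (by fun_prop) x M)
        ((continuous_const.mul habs).intervalIntegrable _ _)
      intro t ht
      have h4 : |(t - x) * V t * f t| = |t - x| * |V t| * |f t| := by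
        rw [abs_mul, abs_mul]
      rw [h4]
      have h5 : |t - x| ≤ M := by
        rw [abs_le]; constructor <;> [linarith [ht.1, ht.2]; linarith [ht.1, ht.2]]
      calc |t - x| * |V t| * |f t| ≤ M * C * |f t| :=
            mul_le_mul_of_nonneg_right
              (mul_le_mul h5 (hC t) (abs_nonneg _) hM0) (abs_nonneg _)
        _ = (C * M) * |f t| := by ring
    have h6 : (∫ t in x..M, (C * M) * |f t|) = (C * M) * ∫ t in x..M, |f t| :=
      integral_const_mul _ _
    have h7 : (∫ t in x..M, |f t|) = A - F x := by linarith
    rw [h6, h7] at h3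
    calc |f x| ≤ |θ| * |∫ t in x..M, (t - x) * V t * f t| := h1
      _ ≤ |θ| * ((C * M) * (A - F x)) :=
          mul_le_mul_of_nonneg_left (le_trans h2 h3) (abs_nonneg _)
      _ = K * (A - F x) := by rw [hK]; ring
  -- Gronwall via monotonicity
  set h : ℝ → ℝ := fun x => Real.exp (K * x) * (F x - A) with hh
  have hder : ∀ x, HasDerivAt h
      ((Real.exp (K * x) * K) * (F x - A) + Real.exp (K * x) * |f x|) x := by
    intro x
    have d1 : HasDerivAt (fun x => Real.exp (K * x)) (Real.exp (K * x) * K) x := by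
      simpa using ((hasDerivAt_id x).const_mul K).exp
    have d2 : HasDerivAt F (|f x|) x :=
      intervalIntegral.integral_hasDerivAt_right (habs.intervalIntegrable _ _)
        (habs.stronglyMeasurableAtFilter _ _) habs.continuousAt
    exact d1.mul (d2.sub_const A)
  have hanti : AntitoneOn h (Icc 0 M) := by
    apply antitoneOn_of_deriv_nonpos (convex_Icc 0 M)
    · exact (Differentiable.continuous (fun x => (hder x).differentiableAt)).continuousOn
    · intro x hx
      exact (hder x).differentiableAt.differentiableWithinAt
    · intro x hx
      rw [interior_Icc] at hx
      rw [(hder x).deriv]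
      have := hineq x (le_of_lt hx.1) (le_of_lt hx.2)
      nlinarith [Real.exp_pos (K * x), abs_nonneg (f x)]
  have hF0 : F 0 = 0 := integral_same
  have hFM : F M = A := rfl
  have hh0 : h 0 = -A := by simp [hh, hF0]
  have hhM : h M = 0 := by simp [hh, hFM]
  have hAn : 0 ≤ A := integral_nonneg hM0 (fun t _ => abs_nonneg _)
  have : h M ≤ h 0 := hanti (left_mem_Icc.mpr hM0) (right_mem_Icc.mpr hM0) hM0
  have hA0 : A = 0 := by rw [hh0, hhM] at this; linarith
  -- conclude f M = M
  have hzero : (∫ t in (0:ℝ)..M, (M - t) * V t * f t) = 0 := by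
    have hb1 : |∫ t in (0:ℝ)..M, (M - t) * V t * f t|
        ≤ ∫ t in (0:ℝ)..M, |(M - t) * V t * f t| :=
      intervalIntegral.abs_integral_le_integral_abs hM0
    have hb2 : (∫ t in (0:ℝ)..M, |(M - t) * V t * f t|)
        ≤ ∫ t in (0:ℝ)..M, (C * M) * |f t| := by
      apply integral_mono_on hM0 (IIabs hV hC hf _ (by fun_prop) 0 M)
        ((continuous_const.mul habs).intervalIntegrable _ _)
      intro t ht
      rw [abs_mul, abs_mul]
      have h5 : |M - t| ≤ M := by rw [abs_le]; constructor <;> linarith [ht.1, ht.2]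
      calc |M - t| * |V t| * |f t| ≤ M * C * |f t| :=
            mul_le_mul_of_nonneg_right
              (mul_le_mul h5 (hC t) (abs_nonneg _) hM0) (abs_nonneg _)
        _ = (C * M) * |f t| := by ring
    rw [intervalIntegral.integral_const_mul] at hb2
    have : (∫ t in (0:ℝ)..M, |f t|) = A := rfl
    rw [this, hA0, mul_zero] at hb2
    have hb3 : 0 ≤ |∫ t in (0:ℝ)..M, (M - t) * V t * f t| := abs_nonneg _
    exact abs_eq_zero.mp (le_antisymm (le_trans hb1 hb2) hb3)
  have := hv M hM0
  rw [hzero, mul_zero, add_zero] at this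
  rw [hc0] at this
  exact absurd this.symm (ne_of_gt hM)

end core



open MeasureTheory Set

/-- If `ψ_θ'(M) = 0`, the function `Ψ(x) := ψ_θ(|x|)/|x|` on `ℝ³` belongs to the
weighted space `L²(ℝ³, (1+|x|²)^{−(1+δ)/2} dx)` for every `δ > 0`, but not to
`L²(ℝ³)`: its squared integral is infinite. -/
theorem resonance_weighted_L2_not_L2
    (M : ℝ) (hM : 0 < M) (V : ℝ → ℝ) (hVmeas : Measurable V)
    (hVbd : ∃ C : ℝ, ∀ x : ℝ, |V x| ≤ C)
    (hVsupp : ∀ x : ℝ, x ∉ Set.Icc 0 M → V x = 0)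
    (θ : ℝ) (ψ : ℝ → ℝ) (hψc : ContinuousOn ψ (Set.Ici 0))
    (hψ : ∀ x ≥ (0:ℝ), ψ x = x + θ * ∫ t in (0:ℝ)..x, (x - t) * V t * ψ t)
    (hres : 1 + θ * ∫ t in (0:ℝ)..M, V t * ψ t = 0) :
    (∀ δ : ℝ, 0 < δ →
      (∫⁻ x : EuclideanSpace ℝ (Fin 3),
        ENNReal.ofReal ((ψ ‖x‖ / ‖x‖) ^ 2 * (1 + ‖x‖ ^ 2) ^ (-((1 + δ) / 2)))) < ⊤) ∧
    (∫⁻ x : EuclideanSpace ℝ (Fin 3),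
      ENNReal.ofReal ((ψ ‖x‖ / ‖x‖) ^ 2)) = ⊤ := by
  obtain ⟨C, hC⟩ := hVbd
  set f : ℝ → ℝ := fun t => ψ (max t 0) with hfdef
  have hf : Continuous f :=
    hψc.comp_continuous (continuous_id.max continuous_const) (fun t => le_max_right t 0)
  have heq : ∀ t, 0 ≤ t → f t = ψ t := fun t ht => by simp [hfdef, max_eq_left ht]
  have hv : ∀ x, 0 ≤ x → f x = x + θ * ∫ t in (0:ℝ)..x, (x - t) * V t * f t := by
    intro x hx
    have e : (∫ t in (0:ℝ)..x, (x - t) * V t * f t)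
        = ∫ t in (0:ℝ)..x, (x - t) * V t * ψ t := by
      apply integral_congr
      intro t ht
      rw [uIcc_of_le hx] at ht
      simp only [heq t ht.1]
    rw [heq x hx, e]
    exact hψ x hx
  have hres' : 1 + θ * ∫ t in (0:ℝ)..M, V t * f t = 0 := by
    have e : (∫ t in (0:ℝ)..M, V t * f t)
        = ∫ t in (0:ℝ)..M, V t * ψ t := by
      apply integral_congr
      intro t ht
      rw [uIcc_of_le hM.le] at ht
      simp only [heq t ht.1]
    rw [e]
    exact hres
  have hconst := const_after hM hVmeas hC hVsupp hf hv hres'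
  have hfM : f M ≠ 0 := fM_ne hM hVmeas hC hVsupp hf hv hres'
  obtain ⟨B, hB⟩ :=
    (isCompact_Icc (a := (0:ℝ)) (b := M)).exists_bound_of_continuousOn hf.continuousOn
  have hbd : ∀ r, 0 ≤ r → |f r| ≤ B := by
    intro r hr
    rcases le_total r M with h | h
    · exact hB r ⟨hr, h⟩
    · rw [hconst r h]; exact hB M (right_mem_Icc.mpr hM.le)
  have hdim : Module.finrank ℝ (EuclideanSpace ℝ (Fin 3)) = 3 := finrank_euclideanSpace_fin
  set S : ℝ≥0∞ := (volume : Measure (EuclideanSpace ℝ (Fin 3))).toSphere univ with hS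
  have hSlt : S < ⊤ := measure_lt_top _ _
  have hSne : S ≠ 0 := by
    rw [hS, Measure.toSphere_apply_univ, hdim]
    exact mul_ne_zero (by norm_num)
      (measure_ball_pos volume (0 : EuclideanSpace ℝ (Fin 3)) one_pos).ne'
  constructor
  · -- part (a)
    intro δ hδ
    set s : ℝ := (1 + δ) / 2 with hsdef
    set w : ℝ → ℝ := fun r => (1 + r ^ 2) ^ (-s) with hwdef
    have hwcont : Continuous w := by
      apply Continuous.rpow_const (continuous_const.add (continuous_pow 2))
      intro x
      left
      show (1:ℝ) + x ^ 2 ≠ 0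
      positivity
    have hwnn : ∀ r, 0 ≤ w r := fun r => Real.rpow_nonneg (by positivity) _
    set g : ℝ → ℝ≥0∞ := fun r => ENNReal.ofReal ((f r / r) ^ 2 * w r) with hgdef
    have hgmeas : Measurable g := by
      apply ENNReal.measurable_ofReal.comp
      exact (((hf.measurable).div measurable_id).pow_const 2).mul hwcont.measurable
    have hrw : ∀ x : EuclideanSpace ℝ (Fin 3),
        ENNReal.ofReal ((ψ ‖x‖ / ‖x‖) ^ 2 * (1 + ‖x‖ ^ 2) ^ (-((1 + δ) / 2))) = g ‖x‖ := by
      intro x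
      rw [hgdef]
      simp only [heq ‖x‖ (norm_nonneg x), hwdef, hsdef]
    rw [lintegral_congr hrw, lintegral_norm_eq volume g hgmeas, hdim]
    apply ENNReal.mul_lt_top hSlt
    have hint : IntegrableOn (fun r => B ^ 2 * w r) (Ioi (0:ℝ)) volume := by
      rw [← Ioc_union_Ioi_eq_Ioi (zero_le_one)]
      apply IntegrableOn.union
      · exact ((continuous_const.mul hwcont).integrableOn_Icc).mono_set Ioc_subset_Icc_self
      · have hmaj : IntegrableOn (fun r : ℝ => B ^ 2 * r ^ (-(1 + δ))) (Ioi (1:ℝ)) volume :=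
          (integrableOn_Ioi_rpow_of_lt (by linarith) one_pos).const_mul _
        apply Integrable.mono' hmaj
          ((continuous_const.mul hwcont).aestronglyMeasurable)
        filter_upwards [ae_restrict_mem measurableSet_Ioi] with r hr
        have hr1 : (1:ℝ) < r := hr
        have hr0 : (0:ℝ) < r := lt_trans one_pos hr1
        have h1 : w r ≤ (r ^ 2) ^ (-s) := by
          apply Real.rpow_le_rpow_of_nonpos (by positivity) (by linarith [sq_nonneg r])
          rw [hsdef]; linarith
        have h2 : ((r:ℝ) ^ 2) ^ (-s) = r ^ (-(1 + δ)) := by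
          rw [← Real.rpow_natCast r 2, ← Real.rpow_mul hr0.le]
          congr 1
          rw [hsdef]
          ring
        rw [Real.norm_eq_abs]; show |B ^ 2 * w r| ≤ _
        rw [abs_of_nonneg (mul_nonneg (sq_nonneg B) (hwnn r))]
        have hB2 : (0:ℝ) ≤ B ^ 2 := sq_nonneg B
        calc B ^ 2 * w r ≤ B ^ 2 * (r ^ 2) ^ (-s) := by
              exact mul_le_mul_of_nonneg_left h1 hB2
          _ = B ^ 2 * r ^ (-(1 + δ)) := by rw [h2]
    have key : (∫⁻ r in Ioi (0:ℝ), ENNReal.ofReal (r ^ (3 - 1)) * g r)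
        ≤ ∫⁻ r in Ioi (0:ℝ), ENNReal.ofReal (B ^ 2 * w r) := by
      apply setLIntegral_mono' measurableSet_Ioi
      intro r hr
      have hr0 : (0:ℝ) < r := hr
      rw [hgdef, ← ENNReal.ofReal_mul (by positivity)]
      apply ENNReal.ofReal_le_ofReal
      have hfr : r ^ (3 - 1) * ((f r / r) ^ 2 * w r) = (f r) ^ 2 * w r := by
        field_simp
        rw [show (3:ℕ) - 1 = 2 from rfl]; ring
      rw [hfr]
      apply mul_le_mul_of_nonneg_right _ (hwnn r)
      rw [← sq_abs (f r)]
      have := hbd r hr0.le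
      nlinarith [abs_nonneg (f r)]
    exact lt_of_le_of_lt key hint.lintegral_lt_top
  · -- part (b)
    set g : ℝ → ℝ≥0∞ := fun r => ENNReal.ofReal ((f r / r) ^ 2) with hgdef
    have hgmeas : Measurable g :=
      ENNReal.measurable_ofReal.comp (((hf.measurable).div measurable_id).pow_const 2)
    have hrw : ∀ x : EuclideanSpace ℝ (Fin 3),
        ENNReal.ofReal ((ψ ‖x‖ / ‖x‖) ^ 2) = g ‖x‖ := by
      intro x
      rw [hgdef]
      simp only [heq ‖x‖ (norm_nonneg x)]
    rw [lintegral_congr hrw, lintegral_norm_eq volume g hgmeas, hdim]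
    rw [ENNReal.mul_eq_top]
    left
    refine ⟨hSne, ?_⟩
    rw [eq_top_iff]
    have hstep : (∫⁻ _r in Ioi M, ENNReal.ofReal ((f M) ^ 2))
        ≤ ∫⁻ r in Ioi (0:ℝ), ENNReal.ofReal (r ^ (3 - 1)) * g r := by
      have hcong : (∫⁻ _r in Ioi M, ENNReal.ofReal ((f M) ^ 2))
          = ∫⁻ r in Ioi M, ENNReal.ofReal (r ^ (3 - 1)) * g r := by
        apply setLIntegral_congr_fun measurableSet_Ioi
        intro r hr
        have hrM : M < r := hr
        have hr0 : (0:ℝ) < r := lt_trans hM hrM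
        show ENNReal.ofReal (f M ^ 2)
            = ENNReal.ofReal (r ^ (3 - 1)) * ENNReal.ofReal ((f r / r) ^ 2)
        rw [hconst r hrM.le, ← ENNReal.ofReal_mul (by positivity)]
        congr 1
        field_simp
      rw [hcong]
      exact lintegral_mono_set (Ioi_subset_Ioi hM.le)
    refine le_trans ?_ hstep
    rw [setLIntegral_const, Real.volume_Ioi, ENNReal.mul_top ?_]
    · rw [Ne, ENNReal.ofReal_eq_zero, not_le]
      have : f M ^ 2 ≠ 0 := pow_ne_zero 2 hfM
      exact lt_of_le_of_ne (sq_nonneg _) (Ne.symm this)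
end

section
/- Fix M > 0 and a bounded measurable function V : ℝ → ℝ with V(x) = 0 for x ∉ [0, M], and let θ ∈ ℝ. If for every δ > 0 one has ∫₀^∞ ψ_θ(x)² (1 + x²)^{−(1+δ)/2} dx < ∞, then ψ_θ'(M) = 0. -/
open MeasureTheory Set

/-- If `ψ_θ` belongs to the weighted space `L²((0,∞), (1+x²)^{−(1+δ)/2} dx)` for
every `δ > 0`, then `ψ_θ'(M) = 1 + θ ∫₀ᴹ V ψ_θ = 0`. -/
theorem weighted_L2_implies_resonance
    (M : ℝ) (hM : 0 < M) (V : ℝ → ℝ) (hVmeas : Measurable V)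
    (hVbd : ∃ C : ℝ, ∀ x : ℝ, |V x| ≤ C)
    (hVsupp : ∀ x : ℝ, x ∉ Set.Icc 0 M → V x = 0)
    (θ : ℝ) (ψ : ℝ → ℝ) (hψc : ContinuousOn ψ (Set.Ici 0))
    (hψ : ∀ x ≥ (0:ℝ), ψ x = x + θ * ∫ t in (0:ℝ)..x, (x - t) * V t * ψ t)
    (hL2 : ∀ δ : ℝ, 0 < δ →
      (∫⁻ x in Set.Ioi (0:ℝ),
        ENNReal.ofReal (ψ x ^ 2 * (1 + x ^ 2) ^ (-((1 + δ) / 2)))) < ⊤) :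
    1 + θ * ∫ t in (0:ℝ)..M, V t * ψ t = 0 := by
  by_contra ha
  obtain ⟨C, hC⟩ := hVbd
  set I1 := ∫ t in (0:ℝ)..M, V t * ψ t with hI1
  set I2 := ∫ t in (0:ℝ)..M, t * (V t * ψ t) with hI2
  set a := 1 + θ * I1 with hadef
  set b := -(θ * I2) with hbdef
  have ha' : a ≠ 0 := ha
  -- integrability of g * (V * ψ) on [0, x]
  have key : ∀ x : ℝ, 0 ≤ x → ∀ g : ℝ → ℝ, Continuous g →
      IntervalIntegrable (fun t => g t * (V t * ψ t)) volume 0 x := by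
    intro x hx g hg
    rw [intervalIntegrable_iff_integrableOn_Ioc_of_le hx]
    obtain ⟨K, hK⟩ := (isCompact_Icc : IsCompact (Icc (0:ℝ) x)).exists_bound_of_continuousOn
      (hψc.mono (fun t ht => ht.1))
    obtain ⟨K2, hK2⟩ := (isCompact_Icc : IsCompact (Icc (0:ℝ) x)).exists_bound_of_continuousOn
      hg.continuousOn
    have hψm : AEMeasurable ψ (volume.restrict (Ioc (0:ℝ) x)) := by
      have h1 : AEMeasurable ψ (volume.restrict (Ici (0:ℝ))) :=
        hψc.aemeasurable measurableSet_Ici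
      exact h1.mono_measure (Measure.restrict_mono (fun t ht => ht.1.le) le_rfl)
    have hmeas : AEStronglyMeasurable (fun t => g t * (V t * ψ t))
        (volume.restrict (Ioc (0:ℝ) x)) :=
      (hg.aemeasurable.mul (hVmeas.aemeasurable.mul hψm)).aestronglyMeasurable
    haveI : IsFiniteMeasure (volume.restrict (Ioc (0:ℝ) x)) :=
      ⟨by rw [Measure.restrict_apply_univ]; exact measure_Ioc_lt_top⟩
    refine ⟨hmeas, HasFiniteIntegral.of_bounded (C := |K2| * (|C| * |K|)) ?_⟩
    filter_upwards [ae_restrict_mem measurableSet_Ioc] with t ht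
    have ht' : t ∈ Icc (0:ℝ) x := ⟨ht.1.le, ht.2⟩
    have h1 : |g t| ≤ |K2| := (hK2 t ht').trans (le_abs_self _)
    have h2 : |V t| ≤ |C| := (hC t).trans (le_abs_self _)
    have h3 : |ψ t| ≤ |K| := (hK t ht').trans (le_abs_self _)
    rw [Real.norm_eq_abs, abs_mul, abs_mul]
    exact mul_le_mul h1 (mul_le_mul h2 h3 (abs_nonneg _) (abs_nonneg _))
      (by positivity) (abs_nonneg _)
  -- ψ is affine beyond M
  have hlin : ∀ x : ℝ, M ≤ x → ψ x = a * x + b := by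
    intro x hMx
    have hx0 : (0:ℝ) ≤ x := hM.le.trans hMx
    have heq : (fun t => (x - t) * V t * ψ t) = fun t => (x - t) * (V t * ψ t) := by
      funext t; ring
    have hint0x : IntervalIntegrable (fun t => (x - t) * (V t * ψ t)) volume 0 x :=
      key x hx0 (fun t => x - t) (by continuity)
    have hsub : uIcc (0:ℝ) M ⊆ uIcc (0:ℝ) x := by
      rw [uIcc_of_le hM.le, uIcc_of_le hx0]
      exact Icc_subset_Icc le_rfl hMx
    have hsub2 : uIcc M x ⊆ uIcc (0:ℝ) x := by
      rw [uIcc_of_le hMx, uIcc_of_le hx0]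
      exact Icc_subset_Icc hM.le le_rfl
    have h0M : IntervalIntegrable (fun t => (x - t) * (V t * ψ t)) volume 0 M :=
      hint0x.mono_set hsub
    have hMxint : IntervalIntegrable (fun t => (x - t) * (V t * ψ t)) volume M x :=
      hint0x.mono_set hsub2
    have hsplit : (∫ t in (0:ℝ)..M, (x - t) * (V t * ψ t))
        + ∫ t in M..x, (x - t) * (V t * ψ t) = ∫ t in (0:ℝ)..x, (x - t) * (V t * ψ t) :=
      intervalIntegral.integral_add_adjacent_intervals h0M hMxint
    have htail : (∫ t in M..x, (x - t) * (V t * ψ t)) = 0 := by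
      rw [intervalIntegral.integral_of_le hMx]
      apply setIntegral_eq_zero_of_forall_eq_zero
      intro t ht
      have : V t = 0 := hVsupp t (fun hmem => absurd hmem.2 (not_le.mpr ht.1))
      simp [this]
    have hI1int : IntervalIntegrable (fun t => x * (V t * ψ t)) volume 0 M :=
      key M hM.le (fun _ => x) continuous_const
    have hI2int : IntervalIntegrable (fun t => t * (V t * ψ t)) volume 0 M :=
      key M hM.le id continuous_id
    have hmain : (∫ t in (0:ℝ)..M, (x - t) * (V t * ψ t)) = x * I1 - I2 := by
      have : (fun t => (x - t) * (V t * ψ t))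
          = fun t => x * (V t * ψ t) - t * (V t * ψ t) := by funext t; ring
      rw [this, intervalIntegral.integral_sub hI1int hI2int,
        intervalIntegral.integral_const_mul, hI2]
    have := hψ x hx0
    rw [this]
    have h2 : (∫ t in (0:ℝ)..x, (x - t) * V t * ψ t)
        = ∫ t in (0:ℝ)..x, (x - t) * (V t * ψ t) := by
      apply intervalIntegral.integral_congr; intro t _; ring
    rw [h2, ← hsplit, htail, add_zero, hmain, hadef, hbdef]
    ring
  -- contradiction with the weighted L² bound at δ = 1
  have h1 := hL2 1 one_pos
  set R := max M (max 1 (2 * |b| / |a|)) with hR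
  have hRM : M ≤ R := le_max_left _ _
  have hR1 : (1:ℝ) ≤ R := le_trans (le_max_left _ _) (le_max_right _ _)
  have hRb : 2 * |b| / |a| ≤ R := le_trans (le_max_right _ _) (le_max_right _ _)
  have haabs : 0 < |a| := abs_pos.mpr ha'
  have hpoint : ∀ x ∈ Ioi R,
      ENNReal.ofReal (a ^ 2 / 8)
        ≤ ENNReal.ofReal (ψ x ^ 2 * (1 + x ^ 2) ^ (-((1 + 1) / 2) : ℝ)) := by
    intro x hx
    have hx1 : (1:ℝ) ≤ x := hR1.trans hx.le
    have hxM : M ≤ x := hRM.trans hx.le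
    have hxb : 2 * |b| / |a| ≤ x := hRb.trans hx.le
    have hb2 : 2 * |b| ≤ |a| * x := by
      rw [div_le_iff₀ haabs] at hxb; linarith [hxb]
    apply ENNReal.ofReal_le_ofReal
    have hexp : (-((1 + 1) / 2) : ℝ) = -1 := by norm_num
    rw [hexp, Real.rpow_neg_one, hlin x hxM]
    have hpos : (0:ℝ) < 1 + x ^ 2 := by positivity
    rw [← div_eq_mul_inv, le_div_iff₀ hpos]
    have habs : |a| * x / 2 ≤ |a * x + b| := by
      have h1 : |a * x| - |b| ≤ |a * x + b| := by
        have := abs_sub_abs_le_abs_sub (a * x) (-b)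
        simpa [sub_neg_eq_add] using this
      have h2 : |a * x| = |a| * x := by
        rw [abs_mul, abs_of_nonneg (by linarith : (0:ℝ) ≤ x)]
      nlinarith [h1, h2]
    have hsq : (|a| * x / 2) ^ 2 ≤ (a * x + b) ^ 2 := by
      rw [← sq_abs (a * x + b)]
      have h0 : (0:ℝ) ≤ |a| * x / 2 := by positivity
      exact pow_le_pow_left₀ h0 habs 2
    have hsq2 : (|a| * x / 2) ^ 2 = a ^ 2 * x ^ 2 / 4 := by
      rw [div_pow, mul_pow, sq_abs]; ring
    have hx2 : (1:ℝ) ≤ x ^ 2 := by nlinarith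
    nlinarith [hsq, hsq2, sq_nonneg a, hx2,
      mul_le_mul_of_nonneg_left hx2 (by positivity : (0:ℝ) ≤ a ^ 2 / 8)]
  have htop : (⊤ : ENNReal) ≤ ∫⁻ x in Ioi (0:ℝ),
      ENNReal.ofReal (ψ x ^ 2 * (1 + x ^ 2) ^ (-((1 + 1) / 2) : ℝ)) := by
    have hc : ENNReal.ofReal (a ^ 2 / 8) ≠ 0 := by
      simp only [ne_eq, ENNReal.ofReal_eq_zero, not_le]
      positivity
    calc (⊤ : ENNReal) = ENNReal.ofReal (a ^ 2 / 8) * volume (Ioi R) := by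
          rw [Real.volume_Ioi, ENNReal.mul_top hc]
      _ = ∫⁻ _ in Ioi R, ENNReal.ofReal (a ^ 2 / 8) := (setLIntegral_const _ _).symm
      _ ≤ ∫⁻ x in Ioi R, ENNReal.ofReal (ψ x ^ 2 * (1 + x ^ 2) ^ (-((1 + 1) / 2) : ℝ)) :=
          setLIntegral_mono' measurableSet_Ioi hpoint
      _ ≤ _ := lintegral_mono_set (Ioi_subset_Ioi (by linarith : (0:ℝ) ≤ R))
  exact absurd h1 (not_lt.mpr (le_trans le_top htop))
end
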